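/- Let $a_0 > 0$, $a \ge 0$, and $a_1,\dots,a_n \in [0,a]$ be nonnegative reals. Then $\sum_{i=1}^n \frac{a_i}{a_0 + \sum_{j=1}^{i-1} a_j} \le 2 + \frac{4a}{a_0} + 2\log\left(1 + \sum_{i=1}^{n-1} \frac{a_i}{a_0}\right)$. -/

import Mathlib

open Finset

lemma log_lb (t : ℝ) (ht : 0 ≤ t) : t / (1 + t) ≤ Real.log (1 + t) := by
  have h1 : (0:ℝ) < 1 + t := by linarith
  have h := Real.log_le_sub_one_of_pos (x := (1+t)⁻¹) (by positivity)
  rw [Real.log_inv] at h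
  have h2 : 1 - (1+t)⁻¹ = t/(1+t) := by field_simp; ring
  linarith
-- step lemma
lemma step_ineq (a s x : ℝ) (hs : 0 < s) (hx : 0 ≤ x) (hxa : x ≤ a) :
    x / s ≤ 2 * Real.log ((s + x)/s) + (2*a/s - 2*a/(s+x)) := by
  have hsx : 0 < s + x := by linarith
  have ht0 : 0 ≤ x / s := by positivity
  have h1 : (s+x)/s = 1 + x/s := by field_simp
  have hlog : (x/s)/(1+x/s) ≤ Real.log (1 + x/s) := log_lb _ ht0
  have h3 : (x/s)/(1+x/s) = x/(s+x) := by
    rw [← h1]; field_simp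
  have A : 2*(x/(s+x)) ≤ 2*Real.log ((s+x)/s) := by
    rw [h1, ← h3]; linarith
  have h2 : 2*a/s - 2*a/(s+x) = 2*a*x/(s*(s+x)) := by field_simp; ring
  have B : 2*x*x/(s*(s+x)) ≤ 2*a/s - 2*a/(s+x) := by
    rw [h2]
    gcongr
  have C : 2*(x/(s+x)) + 2*x*x/(s*(s+x)) = 2*(x/s) := by field_simp
  linarith

lemma tele (a0 a : ℝ) (ha0 : 0 < a0) (ha : 0 ≤ a) (f : ℕ → ℝ) :
    ∀ m : ℕ, (∀ i ∈ Finset.Icc 1 m, 0 ≤ f i ∧ f i ≤ a) →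
    ∑ i ∈ Finset.Icc 1 m, f i / (a0 + ∑ j ∈ Finset.Icc 1 (i-1), f j)
      ≤ 2 * Real.log ((a0 + ∑ j ∈ Finset.Icc 1 m, f j)/a0) + 2*a/a0
        - 2*a/(a0 + ∑ j ∈ Finset.Icc 1 m, f j) := by
  intro m
  induction m with
  | zero => intro _; simp [div_self ha0.ne']
  | succ m ih =>
    intro hm
    have hsub : ∀ i ∈ Finset.Icc 1 m, 0 ≤ f i ∧ f i ≤ a := by
      intro i hi
      exact hm i (Finset.mem_Icc.mpr ⟨(Finset.mem_Icc.mp hi).1, le_trans (Finset.mem_Icc.mp hi).2 (Nat.le_succ m)⟩)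
    have IH := ih hsub
    set S := a0 + ∑ j ∈ Finset.Icc 1 m, f j with hSdef
    have hS : 0 < S := by
      have : 0 ≤ ∑ j ∈ Finset.Icc 1 m, f j :=
        Finset.sum_nonneg (fun j hj => (hsub j hj).1)
      linarith
    have hfm : 0 ≤ f (m+1) ∧ f (m+1) ≤ a :=
      hm (m+1) (Finset.mem_Icc.mpr ⟨Nat.le_add_left 1 m, le_refl _⟩)
    have hS' : 0 < S + f (m+1) := by linarith [hfm.1]
    have hsplit : ∑ j ∈ Finset.Icc 1 (m+1), f j = (∑ j ∈ Finset.Icc 1 m, f j) + f (m+1) :=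
      Finset.sum_Icc_succ_top (Nat.one_le_iff_ne_zero.mpr (Nat.succ_ne_zero m)) f
    have hsplit2 : ∑ i ∈ Finset.Icc 1 (m+1), f i / (a0 + ∑ j ∈ Finset.Icc 1 (i-1), f j)
        = (∑ i ∈ Finset.Icc 1 m, f i / (a0 + ∑ j ∈ Finset.Icc 1 (i-1), f j))
          + f (m+1) / S := by
      rw [Finset.sum_Icc_succ_top (Nat.one_le_iff_ne_zero.mpr (Nat.succ_ne_zero m))]
      simp [hSdef]
    have hstep := step_ineq a S (f (m+1)) hS hfm.1 hfm.2
    have hlogsplit : Real.log ((S + f (m+1))/a0)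
        = Real.log ((S + f (m+1))/S) + Real.log (S/a0) := by
      rw [Real.log_div hS'.ne' ha0.ne', Real.log_div hS'.ne' hS.ne',
        Real.log_div hS.ne' ha0.ne']
      ring
    rw [hsplit2]
    have hgoalS : a0 + ∑ j ∈ Finset.Icc 1 (m+1), f j = S + f (m+1) := by
      rw [hsplit, hSdef]; ring
    rw [hgoalS, hlogsplit]
    linarith

theorem stmt_1 (n : ℕ) (a0 a : ℝ) (ha0 : 0 < a0) (ha : 0 ≤ a)
    (f : ℕ → ℝ) (hf : ∀ i ∈ Finset.Icc 1 n, 0 ≤ f i ∧ f i ≤ a) :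
    ∑ i ∈ Finset.Icc 1 n, f i / (a0 + ∑ j ∈ Finset.Icc 1 (i - 1), f j) ≤
      2 + 4 * a / a0 + 2 * Real.log (1 + ∑ i ∈ Finset.Icc 1 (n - 1), f i / a0) := by
  cases n with
  | zero => simp; positivity
  | succ m =>
    have hsub : ∀ i ∈ Finset.Icc 1 m, 0 ≤ f i ∧ f i ≤ a := by
      intro i hi
      exact hf i (Finset.mem_Icc.mpr ⟨(Finset.mem_Icc.mp hi).1, le_trans (Finset.mem_Icc.mp hi).2 (Nat.le_succ m)⟩)
    have T := tele a0 a ha0 ha f m hsub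
    set S := a0 + ∑ j ∈ Finset.Icc 1 m, f j with hSdef
    have hS : 0 < S := by
      have : 0 ≤ ∑ j ∈ Finset.Icc 1 m, f j :=
        Finset.sum_nonneg (fun j hj => (hsub j hj).1)
      linarith
    have hfm : 0 ≤ f (m+1) ∧ f (m+1) ≤ a :=
      hf (m+1) (Finset.mem_Icc.mpr ⟨Nat.le_add_left 1 m, le_refl _⟩)
    have hsplit2 : ∑ i ∈ Finset.Icc 1 (m+1), f i / (a0 + ∑ j ∈ Finset.Icc 1 (i-1), f j)
        = (∑ i ∈ Finset.Icc 1 m, f i / (a0 + ∑ j ∈ Finset.Icc 1 (i-1), f j))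
          + f (m+1) / S := by
      rw [Finset.sum_Icc_succ_top (Nat.one_le_iff_ne_zero.mpr (Nat.succ_ne_zero m))]
      simp [hSdef]
    have hlast : f (m+1) / S ≤ a / S := by gcongr; exact hfm.2
    have hlog : Real.log (S/a0) = Real.log (1 + ∑ i ∈ Finset.Icc 1 m, f i / a0) := by
      congr 1
      rw [← Finset.sum_div, hSdef]
      field_simp
    have h2a : 0 ≤ 2*a/S := by positivity
    have hub : 2*a/a0 ≤ 2 + 4*a/a0 := by
      have : 0 ≤ a/a0 := by positivity
      have h4 : 4*a/a0 = 4*(a/a0) := by ring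
      have h2 : 2*a/a0 = 2*(a/a0) := by ring
      rw [h4, h2]; linarith
    have hm1 : m + 1 - 1 = m := rfl
    rw [hm1]
    rw [hsplit2, ← hlog]
    have haS : a/S ≤ 2*a/S := by
      have : 0 ≤ a/S := by positivity
      have : 2*a/S = 2*(a/S) := by ring
      linarith [this]
    linarith
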